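/- Let X be a code over A with a^n ∈ X, B = A \ {a}, and w ∈ B(a*B)*. Then the set X_w ∪ {a^n} is a code, where X_w = a*wa* ∩ [X* \ (a^n X* ∪ X* a^n)]. -/

import Mathlib

/-- The submonoid `X*` generated by a set of words `X`. -/
def starOf {A : Type*} (X : Set (List A)) : Set (List A) :=
  {u | ∃ l : List (List A), (∀ w ∈ l, w ∈ X) ∧ l.flatten = u}

/-- `X` is a code: unique factorization of words of `X*` into elements of `X`. -/
def IsCode {A : Type*} (X : Set (List A)) : Prop :=
  ∀ l m : List (List A), (∀ w ∈ l, w ∈ X) → (∀ w ∈ m, w ∈ X) →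
    l.flatten = m.flatten → l = m

/-- `X_w = a*wa* ∩ [X* \ (a^n X* ∪ X* a^n)]`. -/
def Xw {A : Type*} (X : Set (List A)) (a : A) (n : ℕ) (w : List A) : Set (List A) :=
  {x | (∃ r v : ℕ, x = List.replicate r a ++ w ++ List.replicate v a) ∧
    x ∈ starOf X ∧
    (¬∃ y ∈ starOf X, x = List.replicate n a ++ y) ∧
    (¬∃ y ∈ starOf X, x = y ++ List.replicate n a)}

section Aux

variable {A : Type*} {X : Set (List A)} {a : A} {n : ℕ}

lemma nil_not_mem_of_isCode (hcode : IsCode X) : ([] : List A) ∉ X := by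
  intro h
  have := hcode [[]] [] (by simpa) (by simp) (by simp)
  simp at this

lemma starOf_nil : ([] : List A) ∈ starOf X := ⟨[], by simp, rfl⟩

lemma mem_starOf_of_mem {u : List A} (hu : u ∈ X) : u ∈ starOf X :=
  ⟨[u], by simpa, by simp⟩

lemma starOf_append {u v : List A} (hu : u ∈ starOf X) (hv : v ∈ starOf X) :
    u ++ v ∈ starOf X := by
  obtain ⟨l, hl, rfl⟩ := hu
  obtain ⟨m, hm, rfl⟩ := hv
  refine ⟨l ++ m, ?_, by simp⟩
  intro x hx
  rcases List.mem_append.mp hx with h | h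
  · exact hl x h
  · exact hm x h

lemma flat_rep (m p : ℕ) :
    (List.replicate m (List.replicate p a)).flatten = List.replicate (m * p) a := by
  induction m with
  | zero => simp
  | succ k ih =>
    rw [List.replicate_succ, List.flatten_cons, ih, Nat.succ_mul, Nat.add_comm,
      List.replicate_add]

/-- the only power of `a` in a code containing `a^n` is `a^n` itself -/
lemma pow_eq_n (hcode : IsCode X) (han : List.replicate n a ∈ X)
    {p : ℕ} (hp : List.replicate p a ∈ X) : p = n := by
  by_contra hne
  have hp0 : p ≠ 0 := by
    rintro rfl; exact nil_not_mem_of_isCode hcode (by simpa using hp)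
  have hn0 : n ≠ 0 := by
    rintro rfl; exact nil_not_mem_of_isCode hcode (by simpa using han)
  have h := hcode (List.replicate n (List.replicate p a))
      (List.replicate p (List.replicate n a))
      (by intro x hx; rwa [List.eq_of_mem_replicate hx])
      (by intro x hx; rwa [List.eq_of_mem_replicate hx])
      (by rw [flat_rep, flat_rep, Nat.mul_comm])
  have := congrArg List.length h
  simp at this
  exact hne this.symm

/-- quotient lemma: two `X*`-decompositions of the same word are comparable with
quotient in `X*`. -/
lemma quot_lemma (hcode : IsCode X) {p s q t : List A}
    (hp : p ∈ starOf X) (hs : s ∈ starOf X) (hq : q ∈ starOf X) (ht : t ∈ starOf X)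
    (heq : p ++ s = q ++ t) : ∃ d ∈ starOf X, q = p ++ d ∨ p = q ++ d := by
  obtain ⟨lp, hlp, rfl⟩ := hp
  obtain ⟨ls, hls, rfl⟩ := hs
  obtain ⟨lq, hlq, rfl⟩ := hq
  obtain ⟨lt, hlt, rfl⟩ := ht
  have h := hcode (lp ++ ls) (lq ++ lt)
    (by intro x hx; rcases List.mem_append.mp hx with h | h
        exacts [hlp x h, hls x h])
    (by intro x hx; rcases List.mem_append.mp hx with h | h
        exacts [hlq x h, hlt x h])
    (by simpa using heq)
  rcases List.append_eq_append_iff.mp h with ⟨e, he1, he2⟩ | ⟨e, he1, he2⟩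
  · refine ⟨e.flatten, ⟨e, ?_, rfl⟩, Or.inl ?_⟩
    · intro x hx; exact hlq x (he1 ▸ List.mem_append.mpr (Or.inr hx))
    · rw [he1]; simp
  · refine ⟨e.flatten, ⟨e, ?_, rfl⟩, Or.inr ?_⟩
    · intro x hx; exact hlp x (he1 ▸ List.mem_append.mpr (Or.inr hx))
    · rw [he1]; simp

/-- any nonempty power of `a` in `X*` ends with `a^n` (quotient in `X*`). -/
lemma rep_mem_starOf (hcode : IsCode X) (han : List.replicate n a ∈ X)
    {k : ℕ} (hk : k ≠ 0) (h : List.replicate k a ∈ starOf X) :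
    ∃ j, List.replicate j a ∈ starOf X ∧ k = j + n := by
  obtain ⟨l, hl, hflat⟩ := h
  have hrep : ∀ z ∈ l, z = List.replicate n a := by
    intro z hz
    have : ∀ c ∈ z, c = a := by
      intro c hc
      have : c ∈ List.replicate k a := hflat ▸ List.mem_flatten.mpr ⟨z, hz, hc⟩
      exact List.eq_of_mem_replicate this
    have hzr : z = List.replicate z.length a := List.eq_replicate_length.mpr this
    have := pow_eq_n hcode han (hzr ▸ hl z hz)
    rw [hzr, this]
  rcases List.eq_nil_or_concat l with rfl | ⟨l2, z, hlz⟩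
  · have := congrArg List.length hflat
    simp at this
    exact absurd this.symm hk
  · rw [List.concat_eq_append] at hlz
    subst hlz
    have hz : z = List.replicate n a := hrep z (by simp)
    have hflat2 : l2.flatten ++ List.replicate n a = List.replicate k a := by
      simpa [hz] using hflat
    have hmem : ∀ c ∈ l2.flatten, c = a := by
      intro c hc
      exact List.eq_of_mem_replicate (hflat2 ▸ List.mem_append.mpr (Or.inl hc))
    have hlen : l2.flatten.length + n = k := by
      have := congrArg List.length hflat2; simpa using this
    refine ⟨l2.flatten.length, ?_, by omega⟩
    have : l2.flatten = List.replicate l2.flatten.length a :=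
      List.eq_replicate_length.mpr hmem
    exact this ▸ ⟨l2, fun x hx => hl x (List.mem_append.mpr (Or.inl hx)), rfl⟩


lemma rep_cons_cancel {b b' : A} :
    ∀ (r r' : ℕ) {c c' : List A}, b ≠ a → b' ≠ a →
    List.replicate r a ++ b :: c = List.replicate r' a ++ b' :: c' →
    r = r' ∧ b = b' ∧ c = c' := by
  intro r
  induction r with
  | zero =>
    intro r' c c' hb hb' heq
    cases r' with
    | zero => simpa using heq
    | succ q =>
      rw [List.replicate_succ] at heq
      simp at heq
      exact absurd heq.1 hb
  | succ q ih =>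
    intro r' c c' hb hb' heq
    cases r' with
    | zero =>
      rw [List.replicate_succ] at heq
      simp at heq
      exact absurd heq.1.symm hb'
    | succ q' =>
      rw [List.replicate_succ, List.replicate_succ] at heq
      simp only [List.cons_append, List.cons.injEq] at heq
      obtain ⟨h1, h2, h3⟩ := ih q' hb hb' heq.2
      exact ⟨by omega, h2, h3⟩

end Aux

/-- Let `X` be a code with `a^n ∈ X` and let `w` be a nonempty word whose first and
last letters differ from `a`.  Then `X_w ∪ {a^n}` is a code. -/
theorem Xw_union_an_isCode {A : Type*} (X : Set (List A)) (a : A) (n : ℕ)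
    (hcode : IsCode X) (han : List.replicate n a ∈ X)
    (w : List A) (hw : w ≠ []) (hhead : w.head hw ≠ a) (hlast : w.getLast hw ≠ a) :
    IsCode (Xw X a n w ∪ {List.replicate n a}) := by
  have hn0 : n ≠ 0 := by
    rintro rfl; exact nil_not_mem_of_isCode hcode (by simpa using han)
  -- Y-elements are in X*
  have hYstar : ∀ y ∈ Xw X a n w ∪ {List.replicate n a}, y ∈ starOf X := by
    rintro y (hy | hy)
    · exact hy.2.1
    · rw [Set.mem_singleton_iff] at hy; exact hy ▸ mem_starOf_of_mem han
  -- Y-elements are nonempty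
  have hYne : ∀ y ∈ Xw X a n w ∪ {List.replicate n a}, y ≠ [] := by
    rintro y (hy | hy)
    · obtain ⟨⟨r, v, rfl⟩, -, -, -⟩ := hy
      simp [hw]
    · rw [Set.mem_singleton_iff] at hy
      rw [hy]
      simpa using hn0
  -- flatten of Y-list is in X*
  have hflatstar : ∀ l : List (List A),
      (∀ y ∈ l, y ∈ Xw X a n w ∪ {List.replicate n a}) → l.flatten ∈ starOf X := by
    intro l hl
    induction l with
    | nil => exact starOf_nil
    | cons y l' ih =>
      rw [List.flatten_cons]
      exact starOf_append (hYstar y (hl y (by simp)))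
        (ih fun z hz => hl z (by simp [hz]))
  -- key lemma: no Y-element is a proper prefix of another with quotient in X*
  have key : ∀ y ∈ Xw X a n w ∪ {List.replicate n a},
      ∀ y' ∈ Xw X a n w ∪ {List.replicate n a},
      ∀ d ∈ starOf X, y' = y ++ d → y' = y := by
    rintro y (hy | hy) y' (hy' | hy') d hd heq
    · -- both in X_w
      obtain ⟨⟨r, v, rfl⟩, hyX, -, -⟩ := hy
      obtain ⟨⟨r', v', rfl⟩, -, -, hY2⟩ := hy'
      obtain ⟨b, t, rfl⟩ : ∃ b t, w = b :: t := ⟨w.head hw, w.tail, (List.cons_head_tail hw).symm⟩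
      have hb : b ≠ a := by simpa using hhead
      have heq' : List.replicate r' a ++ b :: (t ++ List.replicate v' a) =
          List.replicate r a ++ b :: (t ++ (List.replicate v a ++ d)) := by
        simpa [List.append_assoc] using heq
      obtain ⟨hrr, -, hcc⟩ := rep_cons_cancel r' r hb hb heq'
      have hvd : List.replicate v' a = List.replicate v a ++ d :=
        List.append_cancel_left hcc
      rcases eq_or_ne d [] with rfl | hdne
      · simpa using heq
      · exfalso
        have hdrep : d = List.replicate d.length a := by
          refine List.eq_replicate_length.mpr fun c hc => ?_
          exact List.eq_of_mem_replicate (hvd ▸ List.mem_append.mpr (Or.inr hc))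
        have hdk : d.length ≠ 0 := by simpa using hdne
        obtain ⟨j, hj, hjk⟩ := rep_mem_starOf hcode han hdk (hdrep ▸ hd)
        apply hY2
        refine ⟨(List.replicate r a ++ (b :: t) ++ List.replicate v a) ++ List.replicate j a,
          starOf_append hyX hj, ?_⟩
        rw [heq, hdrep, hjk, List.replicate_add, ← List.append_assoc]
    · -- y ∈ X_w, y' = a^n : y' = y ++ d with y containing a non-a letter
      exfalso
      rw [Set.mem_singleton_iff] at hy'
      obtain ⟨⟨r, v, rfl⟩, -, -, -⟩ := hy
      have hbmem : w.head hw ∈ List.replicate n a := by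
        rw [← hy', heq]
        exact List.mem_append.mpr (Or.inl (List.mem_append.mpr (Or.inl
          (List.mem_append.mpr (Or.inr (List.head_mem hw))))))
      exact hhead (List.eq_of_mem_replicate hbmem)
    · -- y = a^n, y' ∈ X_w : contradicts y' ∉ a^n X*
      exfalso
      rw [Set.mem_singleton_iff] at hy
      exact hy'.2.2.1 ⟨d, hd, by rw [heq, hy]⟩
    · rw [Set.mem_singleton_iff] at hy hy'
      rw [hy, hy']
  -- main induction
  intro l m hl hm heq
  induction l generalizing m with
  | nil =>
    cases m with
    | nil => rfl
    | cons y m' =>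
      exfalso
      have hne : y ≠ [] := hYne y (hm y (by simp))
      rw [List.flatten_nil, List.flatten_cons] at heq
      exact hne (List.append_eq_nil_iff.mp heq.symm).1
  | cons y l' ih =>
    cases m with
    | nil =>
      exfalso
      have hne : y ≠ [] := hYne y (hl y (by simp))
      rw [List.flatten_cons, List.flatten_nil] at heq
      exact hne (List.append_eq_nil_iff.mp heq).1
    | cons y' m' =>
      have hyY := hl y (by simp)
      have hy'Y := hm y' (by simp)
      rw [List.flatten_cons, List.flatten_cons] at heq
      obtain ⟨d, hd, hcase⟩ := quot_lemma hcode (hYstar y hyY)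
        (hflatstar l' fun z hz => hl z (by simp [hz]))
        (hYstar y' hy'Y)
        (hflatstar m' fun z hz => hm z (by simp [hz])) heq
      have hyy' : y = y' := by
        rcases hcase with h | h
        · exact (key y hyY y' hy'Y d hd h).symm
        · exact key y' hy'Y y hyY d hd h
      subst hyy'
      have heq' : l'.flatten = m'.flatten := List.append_cancel_left heq
      rw [ih m' (fun z hz => hl z (by simp [hz])) (fun z hz => hm z (by simp [hz])) heq']
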